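/- Consider an irreducible transient Markov chain, vertices a,b, and g(v) := E_v[ number of visits to b ] (Green's function), with limsup_v g(v) = 0 and K_5 := sup_v g(v) + (1/2)( d(b) + sum_{u,v} d(u)p(u,v)|g(u)-g(v)| ) finite. Then for any transfinite rotor walk started at a and any transfinite time tau = m*omega + t with m >= 1 at which all vertices have been visited finitely often, | g(a) - n_tau(b)/m | <= K_5/m. -/

import Mathlib

open scoped BigOperators Classical

/-- `(x, r)` is a rotor walk for the rotor mechanism `(d, succ)`.  Rotor values are
`0`-based: rotor value `j` at `u` means the rotor points to `succ u j`
(corresponding to `u^(j+1)` in `1`-based notation).  At each step the rotor at the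
current particle position is incremented cyclically and the particle moves in the
new rotor direction. -/
def IsRotorWalk {V : Type*} (d : V → ℕ) (succ : V → ℕ → V)
    (x : ℕ → V) (r : ℕ → V → ℕ) : Prop :=
  (∀ v, r 0 v < d v) ∧
  (∀ t, r (t + 1) (x t) = (r t (x t) + 1) % d (x t)) ∧
  (∀ t v, v ≠ x t → r (t + 1) v = r t v) ∧
  (∀ t, x (t + 1) = succ (x t) (r (t + 1) (x t)))

/-- the number of visits of the walk `x` to `v` strictly before time `t` -/
noncomputable def nvisits {V : Type*} (x : ℕ → V) (t : ℕ) (v : V) : ℕ :=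
  ((Finset.range t).filter fun s => x s = v).card

/-- the rotor mechanism `(d, succ)` realizes the transition kernel `p`:
`p u v` is the proportion of the `d u` successors of `u` equal to `v` -/
def Realizes {V : Type*} (d : V → ℕ) (succ : V → ℕ → V) (p : V → V → ℝ) : Prop :=
  (∀ u, 0 < d u) ∧
  ∀ u v, p u v = ((Finset.range (d u)).filter fun i => succ u i = v).card / d u

/-- `hitAux p b c t v` is the probability, for the Markov chain with kernel `p`
started at `v`, of hitting `b` before hitting `c` and within `t` steps. -/
noncomputable def hitAux {V : Type*} (p : V → V → ℝ) (b c : V) : ℕ → V → ℝ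
  | 0, v => if v = b then 1 else 0
  | t + 1, v => if v = b then 1 else if v = c then 0 else ∑' w, p v w * hitAux p b c t w

/-- the hitting probability `h_{b,c}(v) = P_v(T_b < T_c)`, as the monotone limit of the
probabilities of hitting `b` before `c` within `t` steps.  (Taking `b = c` gives the
single-target hitting probability `P_v(T_b < ∞)`.) -/
noncomputable def hitProb {V : Type*} (p : V → V → ℝ) (b c : V) (v : V) : ℝ :=
  ⨆ t, hitAux p b c t v

/-- the escape probability `e_{u,v} = P_u(T_v < T_u^+)`: a first step from `u` to `w`,
then hit `v` before `u`. -/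
noncomputable def escProb {V : Type*} (p : V → V → ℝ) (u v : V) : ℝ :=
  ∑' w, p u w * hitProb p v u w

/-- irreducibility of the kernel: any vertex can be reached from any other by a path of
positive-probability steps -/
def IrreducibleKernel {V : Type*} (p : V → V → ℝ) : Prop :=
  ∀ u v : V, ∃ (n : ℕ) (f : ℕ → V), f 0 = u ∧ f n = v ∧ ∀ i < n, 0 < p (f i) (f (i + 1))

/-- A transfinite rotor walk started at `a`: a (finite or infinite) sequence of rotor
walks `X m`, each started at `a`; every walk strictly before stage `M` is transient and
the next walk starts from its limiting rotor configuration; if `M` is finite, the walk at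
stage `M` is recurrent (so the transfinite walk stops evolving there). -/
structure TransRW {V : Type*} (d : V → ℕ) (succ : V → ℕ → V) (a : V) where
  M : ℕ∞
  X : ℕ → ℕ → V
  R : ℕ → ℕ → V → ℕ
  walk : ∀ m : ℕ, (m : ℕ∞) ≤ M → IsRotorWalk d succ (X m) (R m) ∧ X m 0 = a
  transient : ∀ m : ℕ, (m : ℕ∞) < M → ∀ v, {t | X m t = v}.Finite
  limit : ∀ m : ℕ, (m : ℕ∞) < M → ∀ v, ∃ T, ∀ t, T ≤ t → R m t v = R (m + 1) 0 v
  last_recurrent : ∀ m : ℕ, (m : ℕ∞) = M → ∀ v, {t | X m t = v}.Infinite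

/-- `ntau W m t v` is the number of visits to `v` before the transfinite time
`τ = m·ω + t`: all visits during the first `m` (completed) walks, plus the visits of the
`m`-th walk before time `t`. -/
noncomputable def ntau {V : Type*} {d : V → ℕ} {succ : V → ℕ → V} {a : V}
    (W : TransRW d succ a) (m t : ℕ) (v : V) : ℕ :=
  (∑ m' ∈ Finset.range m, {s | W.X m' s = v}.ncard) + nvisits (W.X m) t v

/-- `greenAux p b t v` is the expected number of visits to `b` within the first `t` steps
for the chain started at `v`. -/
noncomputable def greenAux {V : Type*} (p : V → V → ℝ) (b : V) : ℕ → V → ℝ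
  | 0, v => if v = b then 1 else 0
  | t + 1, v => (if v = b then 1 else 0) + ∑' w, p v w * greenAux p b t w

/-- the Green function `g(v) = E_v #\{t ≥ 0 : X_t = b\}` -/
noncomputable def green {V : Type*} (p : V → V → ℝ) (b : V) (v : V) : ℝ :=
  ⨆ t, greenAux p b t v

/-- transience: `P_v(T_v^+ < ∞) < 1` for every `v` -/
def TransientKernel {V : Type*} (p : V → V → ℝ) : Prop :=
  ∀ v : V, ∑' w, p v w * hitProb p v v w < 1

section Helpers
open Finset
variable {V : Type*} {d : V → ℕ} {succ : V → ℕ → V} {p : V → V → ℝ}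

lemma p_nonneg (hreal : Realizes d succ p) (u v : V) : 0 ≤ p u v := by
  rw [hreal.2]; positivity

lemma tsum_mul_eq (hreal : Realizes d succ p) (u : V) (f : V → ℝ) :
    ∑' w, p u w * f w = (∑ i ∈ Finset.range (d u), f (succ u i)) / d u := by
  classical
  have hd : (0:ℝ) < d u := by exact_mod_cast hreal.1 u
  have hsupp : ∀ w ∉ (Finset.range (d u)).image (succ u), p u w * f w = 0 := by
    intro w hw
    have he : (Finset.range (d u)).filter (fun i => succ u i = w) = ∅ := by
      ext i
      simp only [Finset.mem_filter, Finset.mem_range, Finset.notMem_empty, iff_false, not_and]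
      intro hi hiw
      exact hw (Finset.mem_image.2 ⟨i, Finset.mem_range.2 hi, hiw⟩)
    rw [hreal.2, he]; simp
  rw [tsum_eq_sum hsupp, Finset.sum_comp f (succ u), Finset.sum_div]
  refine Finset.sum_congr rfl fun w _ => ?_
  rw [hreal.2]
  simp only [nsmul_eq_mul]
  ring

lemma tsum_p_eq_one (hreal : Realizes d succ p) (u : V) : ∑' w, p u w = 1 := by
  have := tsum_mul_eq hreal u (fun _ => (1:ℝ))
  simp only [mul_one, Finset.sum_const, Finset.card_range, nsmul_eq_mul] at this
  rw [this, div_self]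
  exact_mod_cast (hreal.1 u).ne'

lemma hitAux_succ (hreal : Realizes d succ p) (b c : V) (t : ℕ) (v : V) :
    hitAux p b c (t + 1) v = if v = b then 1 else if v = c then 0 else
      (∑ i ∈ Finset.range (d v), hitAux p b c t (succ v i)) / d v := by
  simp only [hitAux]; rw [tsum_mul_eq hreal]

lemma greenAux_succ (hreal : Realizes d succ p) (b : V) (t : ℕ) (v : V) :
    greenAux p b (t + 1) v = (if v = b then 1 else 0) +
      (∑ i ∈ Finset.range (d v), greenAux p b t (succ v i)) / d v := by
  simp only [greenAux]; rw [tsum_mul_eq hreal]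

lemma hitAux_nonneg (hreal : Realizes d succ p) (b c : V) :
    ∀ t v, 0 ≤ hitAux p b c t v := by
  intro t
  induction t with
  | zero => intro v; simp only [hitAux]; split <;> norm_num
  | succ t ih =>
    intro v
    have hd : (0:ℝ) < d v := by exact_mod_cast hreal.1 v
    rw [hitAux_succ hreal]
    split
    · norm_num
    split
    · norm_num
    exact div_nonneg (Finset.sum_nonneg fun i _ => ih _) hd.le

lemma hitAux_le_one (hreal : Realizes d succ p) (b c : V) :
    ∀ t v, hitAux p b c t v ≤ 1 := by
  intro t
  induction t with
  | zero => intro v; simp only [hitAux]; split <;> norm_num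
  | succ t ih =>
    intro v
    have hd : (0:ℝ) < d v := by exact_mod_cast hreal.1 v
    rw [hitAux_succ hreal]
    split
    · norm_num
    split
    · norm_num
    rw [div_le_one hd]
    calc ∑ i ∈ Finset.range (d v), hitAux p b c t (succ v i)
        ≤ ∑ i ∈ Finset.range (d v), 1 := Finset.sum_le_sum fun i _ => ih _
      _ = (d v : ℝ) := by simp

lemma hitAux_mono (hreal : Realizes d succ p) (b c : V) :
    ∀ t v, hitAux p b c t v ≤ hitAux p b c (t + 1) v := by
  intro t
  induction t with
  | zero =>
    intro v
    have hd : (0:ℝ) < d v := by exact_mod_cast hreal.1 v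
    rw [hitAux_succ hreal]
    simp only [hitAux]
    split
    · norm_num
    split
    · norm_num
    exact div_nonneg (Finset.sum_nonneg fun i _ => by split <;> norm_num) hd.le
  | succ t ih =>
    intro v
    have hd : (0:ℝ) < d v := by exact_mod_cast hreal.1 v
    rw [hitAux_succ hreal, hitAux_succ hreal]
    split
    · norm_num
    split
    · norm_num
    gcongr
    exact ih _

lemma hitAux_le_hitProb (hreal : Realizes d succ p) (b c : V) (t : ℕ) (v : V) :
    hitAux p b c t v ≤ hitProb p b c v :=
  le_ciSup (f := fun t => hitAux p b c t v)
    ⟨1, by rintro x ⟨s, rfl⟩; exact hitAux_le_one hreal b c s v⟩ t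

lemma hitProb_nonneg (hreal : Realizes d succ p) (b c : V) (v : V) :
    0 ≤ hitProb p b c v :=
  le_trans (hitAux_nonneg hreal b c 0 v) (hitAux_le_hitProb hreal b c 0 v)

lemma greenAux_nonneg (hreal : Realizes d succ p) (b : V) :
    ∀ t v, 0 ≤ greenAux p b t v := by
  intro t
  induction t with
  | zero => intro v; simp only [greenAux]; split <;> norm_num
  | succ t ih =>
    intro v
    have hd : (0:ℝ) < d v := by exact_mod_cast hreal.1 v
    rw [greenAux_succ hreal]
    have h0 : 0 ≤ (∑ i ∈ Finset.range (d v), greenAux p b t (succ v i)) / d v :=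
      div_nonneg (Finset.sum_nonneg fun i _ => ih _) hd.le
    split <;> linarith

lemma greenAux_mono (hreal : Realizes d succ p) (b : V) :
    ∀ t v, greenAux p b t v ≤ greenAux p b (t + 1) v := by
  intro t
  induction t with
  | zero =>
    intro v
    have hd : (0:ℝ) < d v := by exact_mod_cast hreal.1 v
    rw [greenAux_succ hreal]
    simp only [greenAux]
    have h0 : 0 ≤ (∑ i ∈ Finset.range (d v), if succ v i = b then (1:ℝ) else 0) / d v :=
      div_nonneg (Finset.sum_nonneg fun i _ => by split <;> norm_num) hd.le
    split <;> linarith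
  | succ t ih =>
    intro v
    have hd : (0:ℝ) < d v := by exact_mod_cast hreal.1 v
    rw [greenAux_succ hreal, greenAux_succ hreal]
    gcongr
    exact ih _

/-- the key transience bound: `greenAux` is uniformly bounded. -/
lemma greenAux_le_hitAux_mul (hreal : Realizes d succ p) (htrans : TransientKernel p) (b : V) :
    ∀ t v, greenAux p b t v ≤ hitAux p b b t v * (1 - ∑' w, p b w * hitProb p b b w)⁻¹ := by
  set ρ := ∑' w, p b w * hitProb p b b w with hρ
  have hρ0 : 0 ≤ ρ := tsum_nonneg fun w =>
    mul_nonneg (p_nonneg hreal b w) (hitProb_nonneg hreal b b w)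
  have hρ1 : ρ < 1 := htrans b
  have h1ρ : (1:ℝ) - ρ ≠ 0 := ne_of_gt (by linarith)
  set C := (1 - ρ)⁻¹ with hC
  have hC0 : 0 < C := inv_pos.2 (by linarith)
  have hCρ : C * (1 - ρ) = 1 := inv_mul_cancel₀ h1ρ
  have hkey : 1 + ρ * C = C := by linear_combination -hCρ
  have hC1 : 1 ≤ C := by nlinarith
  intro t
  induction t with
  | zero =>
    intro v
    simp only [hitAux, greenAux]
    split
    · linarith
    · norm_num
  | succ t ih =>
    intro v
    have hd : (0:ℝ) < d v := by exact_mod_cast hreal.1 v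
    rw [greenAux_succ hreal, hitAux_succ hreal]
    by_cases hb : v = b
    · rw [if_pos hb, if_pos hb, one_mul]
      have h2 : (∑ i ∈ Finset.range (d v), hitProb p b b (succ v i)) / d v = ρ := by
        rw [hρ, tsum_mul_eq hreal, hb]
      have h3 : (∑ i ∈ Finset.range (d v), greenAux p b t (succ v i)) / d v ≤ ρ * C := by
        rw [← h2, ← mul_div_right_comm, Finset.sum_mul]
        gcongr with i hi
        exact (ih _).trans (mul_le_mul_of_nonneg_right (hitAux_le_hitProb hreal b b t _) hC0.le)
      linarith
    · rw [if_neg hb, if_neg hb, if_neg hb, zero_add, ← mul_div_right_comm, Finset.sum_mul]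
      gcongr with i hi
      exact ih _

lemma greenAux_le_C (hreal : Realizes d succ p) (htrans : TransientKernel p) (b : V) (t : ℕ)
    (v : V) : greenAux p b t v ≤ (1 - ∑' w, p b w * hitProb p b b w)⁻¹ := by
  have h := greenAux_le_hitAux_mul hreal htrans b t v
  have hρ0 : 0 ≤ ∑' w, p b w * hitProb p b b w := tsum_nonneg fun w =>
    mul_nonneg (p_nonneg hreal b w) (hitProb_nonneg hreal b b w)
  have hρ1 : (∑' w, p b w * hitProb p b b w) < 1 := htrans b
  have hC0 : (0:ℝ) < (1 - ∑' w, p b w * hitProb p b b w)⁻¹ := inv_pos.2 (by linarith)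
  calc greenAux p b t v ≤ hitAux p b b t v * (1 - ∑' w, p b w * hitProb p b b w)⁻¹ := h
    _ ≤ 1 * (1 - ∑' w, p b w * hitProb p b b w)⁻¹ :=
        mul_le_mul_of_nonneg_right (hitAux_le_one hreal b b t v) hC0.le
    _ = _ := one_mul _

lemma green_tendsto (hreal : Realizes d succ p) (htrans : TransientKernel p) (b v : V) :
    Filter.Tendsto (fun t => greenAux p b t v) Filter.atTop (nhds (green p b v)) := by
  apply tendsto_atTop_ciSup (monotone_nat_of_le_succ fun t => greenAux_mono hreal b t v)
  exact ⟨_, by rintro x ⟨s, rfl⟩; exact greenAux_le_C hreal htrans b s v⟩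

lemma green_nonneg (hreal : Realizes d succ p) (htrans : TransientKernel p) (b v : V) :
    0 ≤ green p b v :=
  le_trans (greenAux_nonneg hreal b 0 v)
    (le_ciSup (f := fun t => greenAux p b t v)
      ⟨_, by rintro x ⟨s, rfl⟩; exact greenAux_le_C hreal htrans b s v⟩ 0)

/-- harmonicity of the Green function (in the form of the one-step recursion) -/
lemma green_harmonic (hreal : Realizes d succ p) (htrans : TransientKernel p) (b v : V) :
    green p b v = (if v = b then 1 else 0) +
      (∑ i ∈ Finset.range (d v), green p b (succ v i)) / d v := by
  have h1 : Filter.Tendsto (fun t => greenAux p b (t + 1) v) Filter.atTop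
      (nhds (green p b v)) :=
    (green_tendsto hreal htrans b v).comp (Filter.tendsto_add_atTop_nat 1)
  have h2 : Filter.Tendsto (fun t => greenAux p b (t + 1) v) Filter.atTop
      (nhds ((if v = b then 1 else 0) +
        (∑ i ∈ Finset.range (d v), green p b (succ v i)) / d v)) := by
    simp only [greenAux_succ hreal]
    apply Filter.Tendsto.const_add
    apply Filter.Tendsto.div_const
    exact tendsto_finset_sum _ fun i _ => green_tendsto hreal htrans b (succ v i)
  exact tendsto_nhds_unique h1 h2

/-! ### Cyclic sums along a rotor sequence -/

/-- the sum of `h` along `N` consecutive rotor directions, starting after offset `c` -/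
noncomputable def cycSum (dd : ℕ) (h : ℕ → ℝ) (c N : ℕ) : ℝ :=
  ∑ k ∈ Finset.range N, h ((c + 1 + k) % dd)

lemma congr_mod_arg (h : ℕ → ℝ) (m : ℕ) {a b : ℕ} (e : a = b) : h (a % m) = h (b % m) := by
  rw [e]

lemma sum_range_split (f : ℕ → ℝ) (s dd : ℕ) (hs : s ≤ dd) :
    ∑ k ∈ Finset.range dd, f k =
      (∑ k ∈ Finset.range s, f k) + ∑ j ∈ Finset.range (dd - s), f (s + j) := by
  rw [← Finset.sum_range_add, Nat.add_sub_cancel' hs]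

lemma window_sum {dd : ℕ} (hd : 0 < dd) (h : ℕ → ℝ) :
    ∀ c, ∑ j ∈ Finset.range dd, h ((c + j) % dd) = ∑ j ∈ Finset.range dd, h j := by
  intro c
  induction c with
  | zero =>
    exact Finset.sum_congr rfl fun j hj => by
      rw [Nat.zero_add, Nat.mod_eq_of_lt (Finset.mem_range.1 hj)]
  | succ c ih =>
    obtain ⟨n, rfl⟩ : ∃ n, dd = n + 1 := ⟨dd - 1, (Nat.succ_pred_eq_of_pos hd).symm⟩
    rw [← ih]
    rw [Finset.sum_range_succ, Finset.sum_range_succ' (fun j => h ((c + j) % (n+1)))]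
    congr 1
    · exact Finset.sum_congr rfl fun j hj => congr_mod_arg h _ (by omega)
    · show h ((c + 1 + n) % (n + 1)) = h ((c + 0) % (n + 1))
      have e1 : c + 1 + n = c + (n + 1) := by omega
      rw [e1, Nat.add_mod_right]
      simp

lemma cycSum_add {dd : ℕ} (h : ℕ → ℝ) (hd : 0 < dd) (c N : ℕ) :
    cycSum dd h c (N + dd) = cycSum dd h c N + ∑ j ∈ Finset.range dd, h j := by
  unfold cycSum
  rw [Finset.sum_range_add]
  congr 1
  rw [← window_sum hd h (c + 1 + N)]
  exact Finset.sum_congr rfl fun j _ => congr_mod_arg h _ (by omega)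

lemma cycSum_add_mul {dd : ℕ} (h : ℕ → ℝ) (hd : 0 < dd) (c N : ℕ) :
    ∀ q, cycSum dd h c (N + q * dd) = cycSum dd h c N + q * ∑ j ∈ Finset.range dd, h j := by
  intro q
  induction q with
  | zero => simp
  | succ q ih =>
    have : N + (q + 1) * dd = (N + q * dd) + dd := by ring
    rw [this, cycSum_add h hd, ih]
    push_cast
    ring

lemma cycSum_reduce {dd : ℕ} (h : ℕ → ℝ) (hd : 0 < dd) (c N : ℕ) :
    cycSum dd h c N = cycSum dd h c (N % dd) + (N / dd : ℕ) * ∑ j ∈ Finset.range dd, h j := by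
  conv_lhs => rw [show N = N % dd + (N / dd) * dd from (Nat.mod_add_div' N dd).symm]
  exact cycSum_add_mul h hd _ _ _

lemma cycSum_abs_le_of_lt {dd : ℕ} (h : ℕ → ℝ) (hd : 0 < dd) (c : ℕ) {s : ℕ} (hs : s ≤ dd) :
    |cycSum dd h c s| ≤ ∑ k ∈ Finset.range s, |h ((c + 1 + k) % dd)| :=
  Finset.abs_sum_le_sum_abs _ _

lemma window_abs_split {dd : ℕ} (hd : 0 < dd) (h : ℕ → ℝ) (c : ℕ) {s : ℕ} (hs : s ≤ dd) :
    (∑ k ∈ Finset.range s, |h ((c + 1 + k) % dd)|) +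
      ∑ j ∈ Finset.range (dd - s), |h ((c + 1 + s + j) % dd)| =
    ∑ j ∈ Finset.range dd, |h j| := by
  have h1 : ∑ k ∈ Finset.range dd, |h ((c + 1 + k) % dd)| = ∑ j ∈ Finset.range dd, |h j| := by
    have := window_sum hd (fun j => |h j|) (c + 1)
    exact this
  rw [← h1, sum_range_split (fun k => |h ((c + 1 + k) % dd)|) s dd hs]
  have e : ∀ j, |h ((c + 1 + s + j) % dd)| = |h ((c + 1 + (s + j)) % dd)| :=
    fun j => congr_mod_arg (fun x => |h x|) _ (by omega)
  simp only [e]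

/-- the `1/2`-bound for a partial cyclic sum of a function whose full-cycle sum vanishes -/
lemma cycSum_half_bound {dd : ℕ} (h : ℕ → ℝ) (hd : 0 < dd)
    (hW : ∑ j ∈ Finset.range dd, h j = 0) (c N : ℕ) :
    |cycSum dd h c N| ≤ (1 / 2) * ∑ j ∈ Finset.range dd, |h j| := by
  rw [cycSum_reduce h hd c N, hW, mul_zero, add_zero]
  set s := N % dd with hsdef
  have hs : s < dd := Nat.mod_lt _ hd
  have hsplit : cycSum dd h c s + ∑ j ∈ Finset.range (dd - s), h ((c + 1 + s + j) % dd) = 0 := by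
    have : cycSum dd h c dd = 0 := by
      have h1 : cycSum dd h c dd = ∑ j ∈ Finset.range dd, h j := by
        have h2 := cycSum_add h hd c 0
        simpa [cycSum] using h2
      rw [h1, hW]
    rw [← this]
    unfold cycSum
    rw [sum_range_split (fun k => h ((c + 1 + k) % dd)) s dd hs.le]
    have e : ∀ j, h ((c + 1 + s + j) % dd) = h ((c + 1 + (s + j)) % dd) :=
      fun j => congr_mod_arg h _ (by omega)
    simp only [e]
  have hP : |cycSum dd h c s| ≤ ∑ k ∈ Finset.range s, |h ((c + 1 + k) % dd)| :=
    Finset.abs_sum_le_sum_abs _ _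
  have hQ : |cycSum dd h c s| ≤ ∑ j ∈ Finset.range (dd - s), |h ((c + 1 + s + j) % dd)| := by
    have : cycSum dd h c s = -(∑ j ∈ Finset.range (dd - s), h ((c + 1 + s + j) % dd)) := by
      linarith
    rw [this, abs_neg]
    exact Finset.abs_sum_le_sum_abs _ _
  have := window_abs_split hd h c hs.le
  linarith

/-- crude linear bound for any partial cyclic sum -/
lemma cycSum_abs_le_mul {dd : ℕ} (h : ℕ → ℝ) (hd : 0 < dd) (c N : ℕ) :
    |cycSum dd h c N| ≤ N * ∑ j ∈ Finset.range dd, |h j| := by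
  calc |cycSum dd h c N| ≤ ∑ k ∈ Finset.range N, |h ((c + 1 + k) % dd)| :=
        Finset.abs_sum_le_sum_abs _ _
    _ ≤ ∑ _k ∈ Finset.range N, ∑ j ∈ Finset.range dd, |h j| := by
        refine Finset.sum_le_sum fun k _ => ?_
        exact Finset.single_le_sum (f := fun j => |h j|) (fun j _ => abs_nonneg _)
          (Finset.mem_range.2 (Nat.mod_lt _ hd))
    _ = N * ∑ j ∈ Finset.range dd, |h j| := by
        rw [Finset.sum_const, Finset.card_range, nsmul_eq_mul]

lemma cycSum_add_one {dd : ℕ} (h : ℕ → ℝ) (c N : ℕ) :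
    cycSum dd (fun j => h j + 1) c N = cycSum dd h c N + (N : ℝ) := by
  unfold cycSum
  rw [Finset.sum_add_distrib, Finset.sum_const, Finset.card_range, nsmul_eq_mul, mul_one]

lemma cycSum_concat {dd : ℕ} (h : ℕ → ℝ) (c N₁ N₂ : ℕ) :
    cycSum dd h c (N₁ + N₂) = cycSum dd h c N₁ + cycSum dd h ((c + N₁) % dd) N₂ := by
  unfold cycSum
  rw [Finset.sum_range_add]
  congr 1
  refine Finset.sum_congr rfl fun j _ => ?_
  show h ((c + 1 + (N₁ + j)) % dd) = h (((c + N₁) % dd + 1 + j) % dd)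
  rw [add_assoc ((c + N₁) % dd), Nat.mod_add_mod]
  exact congr_mod_arg h _ (by omega)

lemma cycSum_mod_offset {dd : ℕ} (h : ℕ → ℝ) (c N : ℕ) :
    cycSum dd h (c % dd) N = cycSum dd h c N := by
  unfold cycSum
  refine Finset.sum_congr rfl fun k _ => ?_
  show h ((c % dd + 1 + k) % dd) = h ((c + 1 + k) % dd)
  rw [add_assoc (c % dd), Nat.mod_add_mod]
  exact congr_mod_arg h _ (by omega)

/-! ### Rotor walk lemmas -/

lemma nvisits_succ (x : ℕ → V) (t : ℕ) (v : V) :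
    nvisits x (t + 1) v = if x t = v then nvisits x t v + 1 else nvisits x t v := by
  unfold nvisits
  rw [Finset.range_add_one, Finset.filter_insert]
  split
  · rw [Finset.card_insert_of_notMem fun hmem => by
      have := (Finset.mem_filter.1 hmem).1; simp at this]
  · rfl

lemma nvisits_zero (x : ℕ → V) (v : V) : nvisits x 0 v = 0 := by
  simp [nvisits]

lemma nvisits_mono (x : ℕ → V) {n n' : ℕ} (h : n ≤ n') (v : V) :
    nvisits x n v ≤ nvisits x n' v :=
  Finset.card_le_card (Finset.filter_subset_filter _ (Finset.range_subset_range.2 h))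

lemma nvisits_eq_zero_of_not_mem {x : ℕ → V} {n : ℕ} {u : V}
    (hu : u ∉ (Finset.range n).image x) : nvisits x n u = 0 := by
  unfold nvisits
  rw [Finset.card_eq_zero, Finset.filter_eq_empty_iff]
  intro s hs hsu
  exact hu (Finset.mem_image.2 ⟨s, hs, hsu⟩)

lemma nvisits_le_ncard {x : ℕ → V} {v : V} (hfin : {t | x t = v}.Finite) (n : ℕ) :
    nvisits x n v ≤ {t | x t = v}.ncard := by
  classical
  rw [Set.ncard_eq_toFinset_card _ hfin]
  apply Finset.card_le_card
  intro s hs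
  simp only [Set.Finite.mem_toFinset, Set.mem_setOf_eq]
  exact (Finset.mem_filter.1 hs).2

lemma nvisits_eventually {x : ℕ → V} {v : V} (hfin : {t | x t = v}.Finite) :
    ∃ T, ∀ n, T ≤ n → nvisits x n v = {t | x t = v}.ncard := by
  classical
  refine ⟨(hfin.toFinset.sup id) + 1, fun n hn => ?_⟩
  unfold nvisits
  rw [Set.ncard_eq_toFinset_card _ hfin]
  congr 1
  ext s
  simp only [Finset.mem_filter, Finset.mem_range, Set.Finite.mem_toFinset, Set.mem_setOf_eq]
  constructor
  · rintro ⟨_, h⟩; exact h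
  · intro h
    refine ⟨?_, h⟩
    have hmem : s ∈ hfin.toFinset := by simpa [Set.Finite.mem_toFinset] using h
    have h2 : id s ≤ hfin.toFinset.sup id := Finset.le_sup hmem
    simp only [id_eq] at h2
    omega

lemma rotor_formula {x : ℕ → V} {r : ℕ → V → ℕ} (hw : IsRotorWalk d succ x r) :
    ∀ t v, r t v = (r 0 v + nvisits x t v) % d v := by
  intro t
  induction t with
  | zero =>
    intro v
    rw [nvisits_zero, Nat.add_zero, Nat.mod_eq_of_lt (hw.1 v)]
  | succ t ih =>
    intro v
    by_cases hv : x t = v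
    · subst hv
      rw [hw.2.1 t, ih, nvisits_succ, if_pos rfl, Nat.mod_add_mod, Nat.add_assoc]
    · rw [hw.2.2.1 t v (fun h => hv h.symm), ih, nvisits_succ, if_neg hv]

lemma walk_step {x : ℕ → V} {r : ℕ → V → ℕ} (hw : IsRotorWalk d succ x r) (g : V → ℝ) (s : ℕ) :
    g (x (s + 1)) - g (x s) =
      g (succ (x s) ((r 0 (x s) + 1 + nvisits x s (x s)) % d (x s))) - g (x s) := by
  congr 2
  rw [hw.2.2.2 s, hw.2.1 s, rotor_formula hw]
  exact congrArg (succ (x s)) (by rw [Nat.mod_add_mod]; exact congrArg (· % d (x s)) (by omega))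

lemma sum_filter_visits {x : ℕ → V} (u : V) (h : ℕ → ℝ) :
    ∀ n, ∑ s ∈ (Finset.range n).filter (fun s => x s = u), h (nvisits x s u)
      = ∑ k ∈ Finset.range (nvisits x n u), h k := by
  intro n
  induction n with
  | zero => simp [nvisits_zero]
  | succ n ih =>
    rw [Finset.range_add_one, Finset.filter_insert]
    by_cases hx : x n = u
    · rw [if_pos hx, Finset.sum_insert fun hmem => by
        have := (Finset.mem_filter.1 hmem).1; simp at this]
      rw [ih, nvisits_succ, if_pos hx, Finset.sum_range_succ]
      ring
    · rw [if_neg hx, ih, nvisits_succ, if_neg hx]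

/-- the basic identity for a single rotor walk run for `n` steps -/
lemma walk_identity {x : ℕ → V} {r : ℕ → V → ℕ} (hw : IsRotorWalk d succ x r) (g : V → ℝ)
    (n : ℕ) :
    ∑ u ∈ (Finset.range n).image x,
        cycSum (d u) (fun j => g (succ u j) - g u) (r 0 u) (nvisits x n u)
      = g (x n) - g (x 0) := by
  classical
  rw [← Finset.sum_range_sub (fun s => g (x s))]
  rw [← Finset.sum_fiberwise_of_maps_to (fun s hs => Finset.mem_image_of_mem x hs)
    (fun s => g (x (s + 1)) - g (x s))]
  refine Finset.sum_congr rfl fun u hu => ?_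
  unfold cycSum
  rw [← sum_filter_visits u (fun k => g (succ u ((r 0 u + 1 + k) % d u)) - g u)]
  refine Finset.sum_congr rfl fun s hs => ?_
  have hxs : x s = u := (Finset.mem_filter.1 hs).2
  rw [walk_step hw g s, hxs]

lemma walk_identity_tsum [Countable V] {x : ℕ → V} {r : ℕ → V → ℕ}
    (hw : IsRotorWalk d succ x r) (g : V → ℝ) (n : ℕ) :
    ∑' u, cycSum (d u) (fun j => g (succ u j) - g u) (r 0 u) (nvisits x n u)
      = g (x n) - g (x 0) := by
  classical
  rw [← walk_identity hw g n]
  exact tsum_eq_sum fun u hu => by rw [nvisits_eq_zero_of_not_mem hu]; simp [cycSum]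

/-! ### Transfinite rotor walk lemmas -/

lemma tendsto_cofinite_transient {x : ℕ → V} (h : ∀ v, {t | x t = v}.Finite) :
    Filter.Tendsto x Filter.atTop Filter.cofinite := by
  rw [← Nat.cofinite_eq_atTop]
  intro s hs
  rw [Filter.mem_map, Filter.mem_cofinite, ← Set.preimage_compl]
  have he : x ⁻¹' sᶜ = ⋃ v ∈ sᶜ, {t | x t = v} := by
    ext t
    simp only [Set.mem_preimage, Set.mem_iUnion, Set.mem_setOf_eq]
    exact ⟨fun ht => ⟨x t, ht, rfl⟩, by rintro ⟨v, hv, rfl⟩; exact hv⟩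
  rw [he]
  exact hs.biUnion fun v _ => h v

lemma rotor_chain {a : V} (W : TransRW d succ a) {i : ℕ} (hi : (i : ℕ∞) < W.M) (u : V) :
    W.R (i + 1) 0 u = (W.R i 0 u + {s | W.X i s = u}.ncard) % d u := by
  obtain ⟨T₁, hT₁⟩ := W.limit i hi u
  obtain ⟨T₂, hT₂⟩ := nvisits_eventually (W.transient i hi u)
  have hw := (W.walk i hi.le).1
  rw [← hT₁ (max T₁ T₂) (le_max_left _ _), rotor_formula hw, hT₂ (max T₁ T₂) (le_max_right _ _)]

lemma rotor_offset {a : V} (W : TransRW d succ a) :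
    ∀ i : ℕ, (i : ℕ∞) ≤ W.M → ∀ u, W.R i 0 u % d u =
      (W.R 0 0 u + ∑ j ∈ Finset.range i, {s | W.X j s = u}.ncard) % d u := by
  intro i
  induction i with
  | zero => intro _ u; simp
  | succ i ih =>
    intro hi u
    have hlt : (i : ℕ∞) < W.M := lt_of_lt_of_le (by exact_mod_cast Nat.lt_succ_self i) hi
    rw [rotor_chain W hlt u, Nat.mod_mod_of_dvd _ dvd_rfl, ← Nat.mod_add_mod, ih hlt.le u,
      Nat.mod_add_mod, Finset.sum_range_succ, ← Nat.add_assoc]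

/-- the key transfinite identity -/
lemma trans_identity [Countable V] {a b : V} (W : TransRW d succ a) (g : V → ℝ)
    (hg0 : Filter.Tendsto g Filter.cofinite (nhds 0))
    (hA : Summable fun u => ∑ j ∈ Finset.range (d u), |g (succ u j) - g u|)
    (hcyc : ∀ u, u ≠ b → ∑ j ∈ Finset.range (d u), (g (succ u j) - g u) = 0)
    (hd0 : ∀ u, 0 < d u) :
    ∀ m : ℕ, (m : ℕ∞) ≤ W.M → ∀ t,
      ∑' u, cycSum (d u) (fun j => g (succ u j) - g u) (W.R 0 0 u) (ntau W m t u)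
        = g (W.X m t) - ((m : ℝ) + 1) * g a := by
  intro m
  induction m with
  | zero =>
    intro hM t
    have hw := (W.walk 0 hM).1
    have h0 : W.X 0 0 = a := (W.walk 0 hM).2
    have hnt : ∀ u, ntau W 0 t u = nvisits (W.X 0) t u := by intro u; simp [ntau]
    simp only [hnt]
    rw [walk_identity_tsum hw g t, h0]
    push_cast
    ring
  | succ m ih =>
    intro hM t
    have hlt : (m : ℕ∞) < W.M := lt_of_lt_of_le (by exact_mod_cast Nat.lt_succ_self m) hM
    have hw' := (W.walk (m + 1) hM).1
    have h0' : W.X (m + 1) 0 = a := (W.walk (m + 1) hM).2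
    have hA0 : ∀ u, 0 ≤ ∑ j ∈ Finset.range (d u), |g (succ u j) - g u| :=
      fun u => Finset.sum_nonneg fun j _ => abs_nonneg _
    set A : V → ℝ := fun u => ∑ j ∈ Finset.range (d u), |g (succ u j) - g u| with hAdef
    set νb : ℕ := ∑ i ∈ Finset.range (m + 1), {s | W.X i s = b}.ncard with hνb
    set D : V → ℝ := fun u => A u + (if u = b then (νb : ℝ) * A b else 0) with hD
    have hDsum : Summable D := by
      refine hA.add (summable_of_ne_finset_zero (s := {b}) fun u hu => ?_)
      rw [if_neg (by simpa using hu)]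
    -- the uniform bound
    have hboundU : ∀ u (k : ℕ), (u = b → k ≤ νb) →
        |cycSum (d u) (fun j => g (succ u j) - g u) (W.R 0 0 u) k| ≤ D u := by
      intro u k hk
      by_cases hub : u = b
      · subst hub
        have h1 := cycSum_abs_le_mul (fun j => g (succ u j) - g u) (hd0 u) (W.R 0 0 u) k
        have h2 : (k : ℝ) ≤ (νb : ℝ) := Nat.cast_le.2 (hk rfl)
        have h3 : (k : ℝ) * A u ≤ (νb : ℝ) * A u :=
          mul_le_mul_of_nonneg_right h2 (hA0 u)
        simp only [hD, if_pos rfl]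
        have := hA0 u
        calc |cycSum (d u) (fun j => g (succ u j) - g u) (W.R 0 0 u) k|
            ≤ (k : ℝ) * A u := h1
          _ ≤ (νb : ℝ) * A u := h3
          _ ≤ A u + (νb : ℝ) * A u := by linarith
      · have h1 := cycSum_half_bound (fun j => g (succ u j) - g u) (hd0 u) (hcyc u hub)
          (W.R 0 0 u) k
        simp only [hD, if_neg hub, add_zero]
        have := hA0 u
        calc |cycSum (d u) (fun j => g (succ u j) - g u) (W.R 0 0 u) k|
            ≤ (1 / 2) * A u := h1
          _ ≤ A u := by linarith
    have hntb : ∀ n, ntau W m n b ≤ νb := by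
      intro n
      have : nvisits (W.X m) n b ≤ {s | W.X m s = b}.ncard :=
        nvisits_le_ncard (W.transient m hlt b) n
      calc ntau W m n b ≤ (∑ i ∈ Finset.range m, {s | W.X i s = b}.ncard) +
            {s | W.X m s = b}.ncard := Nat.add_le_add_left this _
        _ = νb := (Finset.sum_range_succ _ m).symm
    -- pointwise limits
    have hνlim : ∀ u, ∃ T, ∀ n, T ≤ n → ntau W m n u =
        ∑ i ∈ Finset.range (m + 1), {s | W.X i s = u}.ncard := by
      intro u
      obtain ⟨T, hT⟩ := nvisits_eventually (W.transient m hlt u)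
      refine ⟨T, fun n hn => ?_⟩
      show (∑ i ∈ Finset.range m, {s | W.X i s = u}.ncard) + nvisits (W.X m) n u = _
      rw [hT n hn, Finset.sum_range_succ]
    have hpt : ∀ u, Filter.Tendsto
        (fun n => cycSum (d u) (fun j => g (succ u j) - g u) (W.R 0 0 u) (ntau W m n u))
        Filter.atTop (nhds (cycSum (d u) (fun j => g (succ u j) - g u) (W.R 0 0 u)
          (∑ i ∈ Finset.range (m + 1), {s | W.X i s = u}.ncard))) := by
      intro u
      obtain ⟨T, hT⟩ := hνlim u
      refine Filter.Tendsto.congr' ?_ tendsto_const_nhds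
      filter_upwards [Filter.eventually_ge_atTop T] with n hn
      rw [hT n hn]
    have hlim1 : Filter.Tendsto
        (fun n => ∑' u, cycSum (d u) (fun j => g (succ u j) - g u) (W.R 0 0 u) (ntau W m n u))
        Filter.atTop (nhds (∑' u, cycSum (d u) (fun j => g (succ u j) - g u) (W.R 0 0 u)
          (∑ i ∈ Finset.range (m + 1), {s | W.X i s = u}.ncard))) := by
      refine tendsto_tsum_of_dominated_convergence hDsum hpt ?_
      refine Filter.Eventually.of_forall fun n u => ?_
      rw [Real.norm_eq_abs]
      exact hboundU u _ (fun hub => by rw [hub] at *; exact hntb n)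
    have hlim2 : Filter.Tendsto
        (fun n => ∑' u, cycSum (d u) (fun j => g (succ u j) - g u) (W.R 0 0 u) (ntau W m n u))
        Filter.atTop (nhds (0 - ((m : ℝ) + 1) * g a)) := by
      have hfe : (fun n => ∑' u, cycSum (d u) (fun j => g (succ u j) - g u) (W.R 0 0 u)
          (ntau W m n u)) = fun n => g (W.X m n) - ((m : ℝ) + 1) * g a :=
        funext fun n => ih hlt.le n
      rw [hfe]
      have hXcof : Filter.Tendsto (W.X m) Filter.atTop Filter.cofinite :=
        tendsto_cofinite_transient (W.transient m hlt)
      exact (hg0.comp hXcof).sub tendsto_const_nhds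
    have hL : ∑' u, cycSum (d u) (fun j => g (succ u j) - g u) (W.R 0 0 u)
        (∑ i ∈ Finset.range (m + 1), {s | W.X i s = u}.ncard) = -(((m : ℝ) + 1) * g a) := by
      have := tendsto_nhds_unique hlim1 hlim2
      linarith [this]
    -- summability of the two pieces
    have hsum1 : Summable (fun u => cycSum (d u) (fun j => g (succ u j) - g u) (W.R 0 0 u)
        (∑ i ∈ Finset.range (m + 1), {s | W.X i s = u}.ncard)) := by
      refine Summable.of_norm (hDsum.of_nonneg_of_le (fun u => norm_nonneg _) fun u => ?_)
      rw [Real.norm_eq_abs]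
      exact hboundU u _ (fun hub => by rw [hub])
    have hsum2 : Summable (fun u => cycSum (d u) (fun j => g (succ u j) - g u)
        (W.R (m + 1) 0 u) (nvisits (W.X (m + 1)) t u)) := by
      refine summable_of_ne_finset_zero (s := (Finset.range t).image (W.X (m + 1)))
        fun u hu => ?_
      rw [nvisits_eq_zero_of_not_mem hu]
      simp [cycSum]
    -- concatenation
    have hconcat : ∀ u, cycSum (d u) (fun j => g (succ u j) - g u) (W.R 0 0 u)
        (ntau W (m + 1) t u)
        = cycSum (d u) (fun j => g (succ u j) - g u) (W.R 0 0 u)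
            (∑ i ∈ Finset.range (m + 1), {s | W.X i s = u}.ncard)
          + cycSum (d u) (fun j => g (succ u j) - g u) (W.R (m + 1) 0 u)
            (nvisits (W.X (m + 1)) t u) := by
      intro u
      show cycSum _ _ _ ((∑ i ∈ Finset.range (m + 1), {s | W.X i s = u}.ncard) +
        nvisits (W.X (m + 1)) t u) = _
      rw [cycSum_concat]
      congr 1
      conv_rhs => rw [← cycSum_mod_offset]
      rw [rotor_offset W (m + 1) hM u]
    calc ∑' u, cycSum (d u) (fun j => g (succ u j) - g u) (W.R 0 0 u) (ntau W (m + 1) t u)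
        = ∑' u, (cycSum (d u) (fun j => g (succ u j) - g u) (W.R 0 0 u)
            (∑ i ∈ Finset.range (m + 1), {s | W.X i s = u}.ncard)
          + cycSum (d u) (fun j => g (succ u j) - g u) (W.R (m + 1) 0 u)
            (nvisits (W.X (m + 1)) t u)) := tsum_congr hconcat
      _ = _ + _ := Summable.tsum_add hsum1 hsum2
      _ = -(((m : ℝ) + 1) * g a) + (g (W.X (m + 1) t) - g a) := by
          rw [hL, walk_identity_tsum hw' g t, h0']
      _ = g (W.X (m + 1) t) - (((m + 1 : ℕ) : ℝ) + 1) * g a := by push_cast; ring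

end Helpers

/-- **Transfinite walks and number of visits** (Theorem `num-vis-tf`). -/
theorem transfinite_number_of_visits {V : Type*} [Countable V]
    (d : V → ℕ) (succ : V → ℕ → V) (p : V → V → ℝ)
    (hreal : Realizes d succ p) (hirr : IrreducibleKernel p)
    (htrans : TransientKernel p)
    (a b : V)
    (g : V → ℝ) (hg : g = green p b)
    (hlim : Filter.Tendsto g Filter.cofinite (nhds 0))
    (hbdd : BddAbove (Set.range g))
    (K₅ : ℝ)
    (hsum : Summable fun uv : V × V =>
      (d uv.1 : ℝ) * p uv.1 uv.2 * |g uv.1 - g uv.2|)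
    (hK₅ : K₅ = (⨆ v, g v) + (1 / 2) * ((d b : ℝ) +
      ∑' uv : V × V, (d uv.1 : ℝ) * p uv.1 uv.2 * |g uv.1 - g uv.2|))
    (W : TransRW d succ a)
    (m t : ℕ) (hm1 : 1 ≤ m) (hm : (m : ℕ∞) ≤ W.M) :
    |g a - (ntau W m t b : ℝ) / (m : ℝ)| ≤ K₅ / (m : ℝ) := by
  classical
  subst hg
  set g : V → ℝ := green p b with hgdef
  have hd0 : ∀ u, 0 < d u := hreal.1
  have hdr : ∀ u, (0:ℝ) < d u := fun u => by exact_mod_cast hd0 u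
  -- the per-vertex absolute increment sums
  set A : V → ℝ := fun u => ∑ j ∈ Finset.range (d u), |g (succ u j) - g u| with hAdef
  have hA0 : ∀ u, 0 ≤ A u := fun u => Finset.sum_nonneg fun j _ => abs_nonneg _
  have hAeq : ∀ u, ∑' v, (d u : ℝ) * p u v * |g u - g v| = A u := by
    intro u
    have h1 : ∀ v, (d u : ℝ) * p u v * |g u - g v| = p u v * ((d u : ℝ) * |g u - g v|) := by
      intro v; ring
    rw [tsum_congr h1, tsum_mul_eq hreal u (fun v => (d u : ℝ) * |g u - g v|)]
    rw [← Finset.mul_sum, mul_comm, mul_div_assoc, div_self (hdr u).ne', mul_one]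
    exact Finset.sum_congr rfl fun j _ => abs_sub_comm _ _
  have hsum_inner : ∀ u, Summable fun v => (d u : ℝ) * p u v * |g u - g v| := by
    intro u
    exact ((summable_prod_of_nonneg (fun uv => mul_nonneg (mul_nonneg (Nat.cast_nonneg _)
      (p_nonneg hreal _ _)) (abs_nonneg _))).1 hsum).1 u
  have hA : Summable A := by
    have := ((summable_prod_of_nonneg
      (f := fun uv : V × V => (d uv.1 : ℝ) * p uv.1 uv.2 * |g uv.1 - g uv.2|)
      (fun uv => mul_nonneg (mul_nonneg (Nat.cast_nonneg _)
        (p_nonneg hreal _ _)) (abs_nonneg _))).1 hsum).2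
    exact this.congr hAeq
  have htsumA : ∑' u, A u = ∑' uv : V × V, (d uv.1 : ℝ) * p uv.1 uv.2 * |g uv.1 - g uv.2| := by
    rw [Summable.tsum_prod' hsum hsum_inner]
    exact (tsum_congr hAeq).symm
  -- harmonicity
  have hcyc : ∀ u, u ≠ b → ∑ j ∈ Finset.range (d u), (g (succ u j) - g u) = 0 := by
    intro u hub
    have hh := green_harmonic hreal htrans b u
    rw [if_neg hub, zero_add, ← hgdef] at hh
    have hS : ∑ j ∈ Finset.range (d u), g (succ u j) = g u * d u := by
      calc ∑ j ∈ Finset.range (d u), g (succ u j)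
          = ((∑ j ∈ Finset.range (d u), g (succ u j)) / d u) * d u := by
            rw [div_mul_cancel₀ _ (hdr u).ne']
        _ = g u * d u := by rw [← hh]
    rw [Finset.sum_sub_distrib, hS, Finset.sum_const, Finset.card_range, nsmul_eq_mul]
    ring
  have hWb : ∑ j ∈ Finset.range (d b), (g (succ b j) - g b) = -(d b : ℝ) := by
    have hh := green_harmonic hreal htrans b b
    rw [if_pos rfl, ← hgdef] at hh
    have h2 : (∑ j ∈ Finset.range (d b), g (succ b j)) / d b = g b - 1 := by linarith [hh]
    have hS : ∑ j ∈ Finset.range (d b), g (succ b j) = (g b - 1) * d b := by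
      calc ∑ j ∈ Finset.range (d b), g (succ b j)
          = ((∑ j ∈ Finset.range (d b), g (succ b j)) / d b) * d b := by
            rw [div_mul_cancel₀ _ (hdr b).ne']
        _ = (g b - 1) * d b := by rw [h2]
    rw [Finset.sum_sub_distrib, hS, Finset.sum_const, Finset.card_range, nsmul_eq_mul]
    ring
  -- the transfinite identity
  have hMI := trans_identity W g hlim (hA.congr (fun u => rfl)) hcyc hd0 m hm t
  -- abbreviations
  set n : ℕ := ntau W m t b with hn
  set cyc : V → ℝ := fun u =>
    cycSum (d u) (fun j => g (succ u j) - g u) (W.R 0 0 u) (ntau W m t u) with hcycdef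
  set T : V → ℝ := fun u => cyc u + (if u = b then (n : ℝ) else 0) with hT
  set Babs : V → ℝ := fun u => (1 / 2) * A u + (if u = b then (1 / 2) * (d b : ℝ) else 0)
    with hBabs
  have hTabs : ∀ u, |T u| ≤ Babs u := by
    intro u
    by_cases hub : u = b
    · subst hub
      have he : T u = cycSum (d u) (fun j => (g (succ u j) - g u) + 1) (W.R 0 0 u)
          (ntau W m t u) := by
        rw [cycSum_add_one]
        simp [hT, hcycdef, hn]
      have hcyc0 : ∑ j ∈ Finset.range (d u), ((g (succ u j) - g u) + 1) = 0 := by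
        rw [Finset.sum_add_distrib, hWb, Finset.sum_const, Finset.card_range, nsmul_eq_mul]
        ring
      have h1 := cycSum_half_bound (fun j => (g (succ u j) - g u) + 1) (hd0 u) hcyc0
        (W.R 0 0 u) (ntau W m t u)
      have h2 : ∑ j ∈ Finset.range (d u), |(g (succ u j) - g u) + 1| ≤ A u + (d u : ℝ) := by
        calc ∑ j ∈ Finset.range (d u), |(g (succ u j) - g u) + 1|
            ≤ ∑ j ∈ Finset.range (d u), (|g (succ u j) - g u| + 1) :=
              Finset.sum_le_sum fun j _ =>
                (abs_add_le _ _).trans_eq (by rw [abs_one])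
          _ = A u + (d u : ℝ) := by
              rw [Finset.sum_add_distrib, Finset.sum_const, Finset.card_range, nsmul_eq_mul,
                mul_one]
      rw [he]
      simp only [hBabs, if_pos rfl]
      calc |cycSum (d u) (fun j => (g (succ u j) - g u) + 1) (W.R 0 0 u) (ntau W m t u)|
          ≤ (1 / 2) * ∑ j ∈ Finset.range (d u), |(g (succ u j) - g u) + 1| := h1
        _ ≤ (1 / 2) * (A u + (d u : ℝ)) := by linarith
        _ = (1 / 2) * A u + (1 / 2) * (d u : ℝ) := by ring
    · have he : T u = cyc u := by simp [hT, if_neg hub]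
      have h1 := cycSum_half_bound (fun j => g (succ u j) - g u) (hd0 u) (hcyc u hub)
        (W.R 0 0 u) (ntau W m t u)
      rw [he]
      simp only [hBabs, if_neg hub, add_zero]
      exact h1
  have hBabs_sum : Summable Babs := by
    refine ((hA.mul_left (1 / 2)).add (summable_of_ne_finset_zero (s := {b})
      fun u hu => ?_))
    rw [if_neg (by simpa using hu)]
  have hite_sum : Summable (fun u => if u = b then (n : ℝ) else 0) :=
    summable_of_ne_finset_zero (s := {b}) fun u hu => if_neg (by simpa using hu)
  have hT_sum : Summable T := by
    refine Summable.of_norm (hBabs_sum.of_nonneg_of_le (fun u => norm_nonneg _) fun u => ?_)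
    rw [Real.norm_eq_abs]
    exact hTabs u
  have hcyc_sum : Summable cyc := by
    have : (fun u => T u - (if u = b then (n : ℝ) else 0)) = cyc := by
      funext u; simp [hT]
    rw [← this]
    exact hT_sum.sub hite_sum
  have habsT_sum : Summable (fun u => |T u|) :=
    hBabs_sum.of_nonneg_of_le (fun u => abs_nonneg _) hTabs
  have htsumT : ∑' u, T u = (g (W.X m t) - ((m : ℝ) + 1) * g a) + (n : ℝ) := by
    rw [hT]
    rw [Summable.tsum_add hcyc_sum hite_sum, tsum_ite_eq b (fun _ => (n : ℝ))]
    rw [show ∑' u, cyc u = g (W.X m t) - ((m : ℝ) + 1) * g a from hMI]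
  have htsumT_abs : |∑' u, T u| ≤ (1 / 2) * (∑' u, A u) + (1 / 2) * (d b : ℝ) := by
    calc |∑' u, T u| ≤ ∑' u, |T u| := by
          have := norm_tsum_le_tsum_norm (f := T) (by simpa [Real.norm_eq_abs] using habsT_sum)
          simpa [Real.norm_eq_abs] using this
      _ ≤ ∑' u, Babs u := Summable.tsum_le_tsum hTabs habsT_sum hBabs_sum
      _ = (1 / 2) * (∑' u, A u) + (1 / 2) * (d b : ℝ) := by
          rw [hBabs, Summable.tsum_add (hA.mul_left (1 / 2)) (summable_of_ne_finset_zero (s := {b})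
            fun u hu => if_neg (by simpa using hu)), tsum_mul_left,
            tsum_ite_eq b (fun _ => (1 / 2) * (d b : ℝ))]
  -- the sup bound
  have hsup0 : ∀ v, g v ≤ ⨆ v, g v := fun v => le_ciSup hbdd v
  have hgXa : |g (W.X m t) - g a| ≤ ⨆ v, g v := by
    have h1 := green_nonneg hreal htrans b (W.X m t)
    have h2 := green_nonneg hreal htrans b a
    rw [abs_sub_le_iff]
    constructor
    · linarith [hsup0 (W.X m t)]
    · linarith [hsup0 a]
  -- main bound
  have hmain : |(m : ℝ) * g a - (n : ℝ)| ≤ K₅ := by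
    have he : (m : ℝ) * g a - (n : ℝ) = (g (W.X m t) - g a) - ∑' u, T u := by
      rw [htsumT]; ring
    rw [he, hK₅, htsumA.symm]
    calc |(g (W.X m t) - g a) - ∑' u, T u| ≤ |g (W.X m t) - g a| + |∑' u, T u| :=
          abs_sub _ _
      _ ≤ (⨆ v, g v) + ((1 / 2) * (∑' u, A u) + (1 / 2) * (d b : ℝ)) := by
          exact add_le_add hgXa htsumT_abs
      _ = (⨆ v, g v) + 1 / 2 * ((d b : ℝ) + ∑' u, A u) := by ring
  have hm0 : (0:ℝ) < m := by exact_mod_cast hm1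
  have he2 : g a - (n : ℝ) / (m : ℝ) = ((m : ℝ) * g a - (n : ℝ)) / (m : ℝ) := by
    field_simp
  rw [he2, abs_div, abs_of_pos hm0]
  gcongr
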